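/- Diagonal-tableau domination for α ≥ 1: let α ≥ 1 and let λ ⊢ n be a partition with first part λ₁ = n − k, where 1 ≤ n − k. Then eig_α(T_λ^↓) ≤ eig_α(T_{(n−k,⋆)}^↘). -/

import Mathlib

open scoped BigOperators

/-- `N_α(n) = ∑_{j=1}^n j^α`. -/
noncomputable def Nalpha (α : ℝ) (n : ℕ) : ℝ := ∑ j ∈ Finset.Icc 1 n, (j : ℝ) ^ α

/-- The biased eigenvalue statistic of a tableau-filling `T` of the Young diagram `μ`:
`eig_α(T) = (1/N_α(n)) ∑_{(i,j)∈μ} (j-i+1)·T(i,j)^{α−1}` (cells are 0-indexed, which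
leaves `j-i+1` unchanged). -/
noncomputable def eigb (α : ℝ) (μ : YoungDiagram) (T : ℕ × ℕ → ℕ) : ℝ :=
  (Nalpha α μ.card)⁻¹ *
    ∑ c ∈ μ.cells, (((c.2 : ℝ) - (c.1 : ℝ) + 1) * ((T c : ℝ) ^ (α - 1)))
/-- The column-reading tableau `T_λ^↓`: entries `1,…,n` inserted down columns, top to bottom,
leftmost column first. -/
def colTab (μ : YoungDiagram) : ℕ × ℕ → ℕ := fun c =>
  (μ.cells.filter (fun c' => c'.2 < c.2 ∨ (c'.2 = c.2 ∧ c'.1 ≤ c.1))).card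

/-- The partition `(n−k,⋆)` of `n` (for `n−k ≥ 1`): `⌊n/(n−k)⌋` rows of size `n−k`,
followed (when `n−k` does not divide `n`) by a final row of size `n mod (n−k)`.
Cell `(i,j)` (0-indexed) belongs to the diagram iff `j < n−k` and `i(n−k)+j < n`. -/
def nkStar (n k : ℕ) : YoungDiagram where
  cells := (Finset.range n ×ˢ Finset.range n).filter
      (fun c => c.2 < n - k ∧ c.1 * (n - k) + c.2 < n)
  isLowerSet := by
    rintro ⟨i₁, j₁⟩ ⟨i₂, j₂⟩ ⟨h1, h2⟩ hmem
    simp only [Finset.mem_coe, Finset.mem_filter, Finset.mem_product, Finset.mem_range]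
      at hmem ⊢
    obtain ⟨⟨hi, hj⟩, hjk, hsum⟩ := hmem
    refine ⟨⟨lt_of_le_of_lt h1 hi, lt_of_le_of_lt h2 hj⟩, lt_of_le_of_lt h2 hjk, ?_⟩
    exact lt_of_le_of_lt (Nat.add_le_add (Nat.mul_le_mul h1 (le_refl (n - k))) h2) hsum

/-- The diagonal-reading tableau `T_λ^↘`: entries `1,…,n` filled in increasing order of
the diagonal index `j−i`, each diagonal filled from top to bottom.  Explicitly,
`T_λ^↘(i,j) = #{(i',j')∈λ : j'−i' < j−i} + #{(i',j')∈λ : j'−i' = j−i ∧ i' ≤ i}`. -/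
def diagTab (μ : YoungDiagram) : ℕ × ℕ → ℕ := fun c =>
  (μ.cells.filter (fun c' =>
      ((c'.2 : ℤ) - (c'.1 : ℤ) < (c.2 : ℤ) - (c.1 : ℤ)) ∨
        ((c'.2 : ℤ) - (c'.1 : ℤ) = (c.2 : ℤ) - (c.1 : ℤ) ∧ c'.1 ≤ c.1))).card

open Finset


-- lex encoding
lemma lexZ {B a a' r r' : ℤ} (hr : 0 ≤ r) (hrB : r < B) (hr' : 0 ≤ r') (hrB' : r' < B) :
    a' * B + r' ≤ a * B + r ↔ (a' < a ∨ (a' = a ∧ r' ≤ r)) := by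
  constructor
  · intro h
    rcases lt_trichotomy a' a with h1 | h1 | h1
    · exact Or.inl h1
    · exact Or.inr ⟨h1, by subst h1; linarith⟩
    · exfalso
      have : (a + 1) * B ≤ a' * B :=
        mul_le_mul_of_nonneg_right (by omega) (by linarith)
      nlinarith
  · rintro (h | ⟨h1, h2⟩)
    · have : (a' + 1) * B ≤ a * B :=
        mul_le_mul_of_nonneg_right (by omega) (by linarith)
      nlinarith
    · subst h1; linarith

-- rank function of a key
noncomputable def rnk (s : Finset (ℕ × ℕ)) (key : ℕ × ℕ → ℤ) (c : ℕ × ℕ) : ℕ :=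
  (s.filter (fun c' => key c' ≤ key c)).card

lemma rnk_le_rnk (s : Finset (ℕ × ℕ)) (key : ℕ × ℕ → ℤ) {c c' : ℕ × ℕ}
    (h : key c ≤ key c') : rnk s key c ≤ rnk s key c' := by
  apply Finset.card_le_card
  intro a ha
  simp only [Finset.mem_filter] at ha ⊢
  exact ⟨ha.1, le_trans ha.2 h⟩

lemma rnk_lt_rnk (s : Finset (ℕ × ℕ)) (key : ℕ × ℕ → ℤ) {c c' : ℕ × ℕ}
    (hc' : c' ∈ s) (h : key c < key c') : rnk s key c < rnk s key c' := by
  apply Finset.card_lt_card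
  constructor
  · intro a ha
    simp only [Finset.mem_filter] at ha ⊢
    exact ⟨ha.1, le_trans ha.2 h.le⟩
  · intro hsub
    have h1 : c' ∈ s.filter (fun c'' => key c'' ≤ key c') :=
      Finset.mem_filter.mpr ⟨hc', le_refl _⟩
    have h2 := hsub h1
    simp only [Finset.mem_filter] at h2
    exact absurd h2.2 (not_le.mpr h)

lemma one_le_rnk (s : Finset (ℕ × ℕ)) (key : ℕ × ℕ → ℤ) {c : ℕ × ℕ} (hc : c ∈ s) :
    1 ≤ rnk s key c := by
  apply Finset.card_pos.mpr
  exact ⟨c, Finset.mem_filter.mpr ⟨hc, le_refl _⟩⟩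

lemma rnk_le_card (s : Finset (ℕ × ℕ)) (key : ℕ × ℕ → ℤ) (c : ℕ × ℕ) :
    rnk s key c ≤ s.card := Finset.card_le_card (Finset.filter_subset _ _)

lemma image_rnk (s : Finset (ℕ × ℕ)) (key : ℕ × ℕ → ℤ)
    (hinj : ∀ c ∈ s, ∀ c' ∈ s, key c = key c' → c = c') :
    s.image (rnk s key) = Finset.Icc 1 s.card := by
  have hinjOn : Set.InjOn (rnk s key) s := by
    intro c hc c' hc' h
    by_contra hne
    have hk : key c ≠ key c' := fun he => hne (hinj c hc c' hc' he)
    rcases hk.lt_or_gt with h1 | h1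
    · exact absurd h (rnk_lt_rnk s key hc' h1).ne
    · exact absurd h.symm (rnk_lt_rnk s key hc h1).ne
  apply Finset.eq_of_subset_of_card_le
  · intro v hv
    simp only [Finset.mem_image] at hv
    obtain ⟨c, hc, rfl⟩ := hv
    exact Finset.mem_Icc.mpr ⟨one_le_rnk s key hc, rnk_le_card s key c⟩
  · rw [Finset.card_image_of_injOn hinjOn, Nat.card_Icc]
    omega

lemma card_filter_rnk (s : Finset (ℕ × ℕ)) (key : ℕ × ℕ → ℤ)
    (hinj : ∀ c ∈ s, ∀ c' ∈ s, key c = key c' → c = c') (m : ℕ) (hm : 1 ≤ m) :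
    (s.filter (fun c => m ≤ rnk s key c)).card = s.card + 1 - m := by
  have hinjOn : Set.InjOn (rnk s key) ↑(s.filter (fun c => m ≤ rnk s key c)) := by
    intro c hc c' hc' h
    simp only [Finset.coe_filter, Set.mem_setOf_eq] at hc hc'
    by_contra hne
    have hk : key c ≠ key c' := fun he => hne (hinj c hc.1 c' hc'.1 he)
    rcases hk.lt_or_gt with h1 | h1
    · exact absurd h (rnk_lt_rnk s key hc'.1 h1).ne
    · exact absurd h.symm (rnk_lt_rnk s key hc.1 h1).ne
  have h1 : (s.filter (fun c => m ≤ rnk s key c)).image (rnk s key)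
      = (s.image (rnk s key)).filter (fun v => m ≤ v) := by
    rw [Finset.filter_image]
  have h2 := Finset.card_image_of_injOn hinjOn
  rw [h1, image_rnk s key hinj] at h2
  rw [← h2]
  have h3 : (Finset.Icc 1 s.card).filter (fun v => m ≤ v) = Finset.Icc m s.card := by
    ext v
    simp only [Finset.mem_filter, Finset.mem_Icc]
    omega
  rw [h3, Nat.card_Icc]

-- cell coordinate bounds
lemma cell_lt_card {μ : YoungDiagram} {c : ℕ × ℕ} (hc : c ∈ μ.cells) :
    c.1 < μ.card ∧ c.2 < μ.card := by
  obtain ⟨i, j⟩ := c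
  rw [YoungDiagram.mem_cells] at hc
  constructor
  · have h1 : i < μ.colLen j := YoungDiagram.mem_iff_lt_colLen.mp hc
    have h2 : μ.colLen j = (μ.col j).card := μ.colLen_eq_card
    have h3 : (μ.col j).card ≤ μ.card := Finset.card_le_card
      (fun c hc => (YoungDiagram.mem_cells _).mpr (YoungDiagram.mem_col_iff.mp hc).1)
    omega
  · have h1 : j < μ.rowLen i := YoungDiagram.mem_iff_lt_rowLen.mp hc
    have h2 : μ.rowLen i = (μ.row i).card := μ.rowLen_eq_card
    have h3 : (μ.row i).card ≤ μ.card := Finset.card_le_card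
      (fun c hc => (YoungDiagram.mem_cells _).mpr (YoungDiagram.mem_row_iff.mp hc).1)
    omega

-- counting per row
lemma row_count (a : ℕ) (z : ℤ) :
    ((Finset.range a).filter (fun j : ℕ => z ≤ (j : ℤ))).card = a - z.toNat := by
  have h1 : (Finset.range a).filter (fun j : ℕ => z ≤ (j : ℤ))
      = Finset.Ico z.toNat a := by
    ext j
    simp only [Finset.mem_filter, Finset.mem_range, Finset.mem_Ico]
    omega
  rw [h1, Nat.card_Ico]

-- count of cells with content ≥ t, decomposed by rows
lemma count_rows (μ : YoungDiagram) (N : ℕ) (hN : ∀ c ∈ μ.cells, c.1 < N) (t : ℤ) :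
    (μ.cells.filter (fun c => t ≤ (c.2 : ℤ) - c.1)).card
      = ∑ i ∈ Finset.range N, (μ.rowLen i - (t + i).toNat) := by
  rw [Finset.card_eq_sum_card_fiberwise
    (f := Prod.fst) (t := Finset.range N)
    (fun c hc => Finset.mem_range.mpr (hN c (Finset.mem_filter.mp hc).1))]
  apply Finset.sum_congr rfl
  intro i _
  rw [← row_count (μ.rowLen i) (t + i)]
  have himg : (μ.cells.filter (fun c => t ≤ (c.2 : ℤ) - c.1)).filter (fun c => c.1 = i)
      = ((Finset.range (μ.rowLen i)).filter (fun j : ℕ => t + i ≤ (j : ℤ))).image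
          (fun j => (i, j)) := by
    ext c
    simp only [Finset.mem_filter, Finset.mem_image, Finset.mem_range]
    constructor
    · rintro ⟨⟨hcell, hcont⟩, hfst⟩
      refine ⟨c.2, ⟨?_, ?_⟩, ?_⟩
      · rw [← hfst]
        exact YoungDiagram.mem_iff_lt_rowLen.mp
          ((YoungDiagram.mem_cells _).mp (by rwa [show ((c.1 : ℕ), (c.2 : ℕ)) = c from rfl]))
      · rw [← hfst]; omega
      · rw [← hfst]
    · rintro ⟨j, ⟨hj1, hj2⟩, rfl⟩
      refine ⟨⟨?_, by push_cast; omega⟩, rfl⟩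
      rw [YoungDiagram.mem_cells _, YoungDiagram.mem_iff_lt_rowLen]
      exact hj1
  rw [himg, Finset.card_image_of_injective _ (fun a b h => by
    simpa using congrArg Prod.snd h)]

lemma mem_nkStar {n k : ℕ} (hnk : 1 ≤ n - k) {i j : ℕ} :
    (i, j) ∈ nkStar n k ↔ j < min (n - k) (n - i * (n - k)) := by
  show (i, j) ∈ (nkStar n k).cells ↔ _
  simp only [nkStar, YoungDiagram.mem_mk, Finset.mem_filter, Finset.mem_product,
    Finset.mem_range]
  constructor
  · rintro ⟨⟨hi, hj⟩, hjk, hsum⟩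
    omega
  · intro h
    have h1 : j < n - k := lt_of_lt_of_le h (min_le_left _ _)
    have h2 : j < n - i * (n - k) := lt_of_lt_of_le h (min_le_right _ _)
    have h3 : i * (n - k) + j < n := by omega
    have h4 : i < n := by
      have : i ≤ i * (n - k) := Nat.le_mul_of_pos_right i hnk
      omega
    exact ⟨⟨h4, by omega⟩, h1, h3⟩

lemma rowLen_nkStar {n k : ℕ} (hnk : 1 ≤ n - k) (i : ℕ) :
    (nkStar n k).rowLen i = min (n - k) (n - i * (n - k)) := by
  have key : ∀ j, (i, j) ∈ nkStar n k ↔ j < min (n - k) (n - i * (n - k)) :=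
    fun j => mem_nkStar hnk
  apply le_antisymm
  · by_contra h
    push_neg at h
    have := (key (min (n - k) (n - i * (n - k)))).mp
      (YoungDiagram.mem_iff_lt_rowLen.mpr h)
    omega
  · by_contra h
    push_neg at h
    have := YoungDiagram.mem_iff_lt_rowLen.mp
      ((key ((nkStar n k).rowLen i)).mpr h)
    omega

lemma sum_min_q (q : ℕ) (N : ℕ) : ∀ m : ℕ,
    ∑ i ∈ Finset.range m, min q (N - i * q) = min N (m * q) := by
  intro m
  induction m with
  | zero => simp
  | succ m ih =>
    rw [Finset.sum_range_succ, ih]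
    have : (m + 1) * q = m * q + q := by ring
    omega

lemma card_nkStar {n k : ℕ} (hnk : 1 ≤ n - k) : (nkStar n k).card = n := by
  have hN : ∀ c ∈ (nkStar n k).cells, c.1 < n := by
    intro c hc
    simp only [nkStar, YoungDiagram.mem_mk, Finset.mem_filter, Finset.mem_product,
      Finset.mem_range] at hc
    exact hc.1.1
  have h0 : (nkStar n k).cells.filter (fun c => (-(n:ℤ)) ≤ (c.2 : ℤ) - c.1)
      = (nkStar n k).cells := by
    apply Finset.filter_true_of_mem
    intro c hc
    have := hN c hc
    omega
  have h1 := count_rows (nkStar n k) n hN (-(n:ℤ))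
  rw [h0] at h1
  show (nkStar n k).cells.card = n
  rw [h1]
  have h2 : ∀ i ∈ Finset.range n, (nkStar n k).rowLen i - ((-(n:ℤ)) + i).toNat
      = min (n - k) (n - i * (n - k)) := by
    intro i hi
    rw [rowLen_nkStar hnk]
    have : ((-(n:ℤ)) + i).toNat = 0 := by
      simp only [Finset.mem_range] at hi
      omega
    omega
  rw [Finset.sum_congr rfl h2, sum_min_q]
  have : n ≤ n * (n - k) := Nat.le_mul_of_pos_right n hnk
  omega


lemma lower_eq_range (s : Finset ℕ) (hlow : ∀ i j : ℕ, i ≤ j → j ∈ s → i ∈ s) :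
    s = Finset.range s.card := by
  ext i
  simp only [Finset.mem_range]
  constructor
  · intro hi
    have hsub : Finset.range (i + 1) ⊆ s := by
      intro x hx
      exact hlow x i (by simpa using Nat.lt_succ_iff.mp (Finset.mem_range.mp hx)) hi
    have := Finset.card_le_card hsub
    simpa using this
  · intro hi
    by_contra hns
    have hsub : s ⊆ Finset.range i := by
      intro j hj
      rw [Finset.mem_range]
      by_contra hji
      exact hns (hlow i j (by omega) hj)
    have := Finset.card_le_card hsub
    simp only [Finset.card_range] at this
    omega

lemma card_eq_sum_rowLen (μ : YoungDiagram) (N : ℕ) (hN : ∀ c ∈ μ.cells, c.1 < N) :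
    μ.card = ∑ i ∈ Finset.range N, μ.rowLen i := by
  have h0 : μ.cells.filter (fun c => (-(N:ℤ)) ≤ (c.2 : ℤ) - c.1) = μ.cells := by
    apply Finset.filter_true_of_mem
    intro c hc
    have := hN c hc
    omega
  have h1 := count_rows μ N hN (-(N:ℤ))
  rw [h0] at h1
  show μ.cells.card = _
  rw [h1]
  apply Finset.sum_congr rfl
  intro i hi
  simp only [Finset.mem_range] at hi
  have : ((-(N:ℤ)) + i).toNat = 0 := by omega
  omega

-- the core count inequality
lemma countG {n k : ℕ} (μ : YoungDiagram) (hcard : μ.card = n)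
    (hq : μ.rowLen 0 = n - k) (hnk : 1 ≤ n - k) (t : ℤ) :
    (μ.cells.filter (fun c => t ≤ (c.2 : ℤ) - c.1)).card
      ≤ ((nkStar n k).cells.filter (fun c => t ≤ (c.2 : ℤ) - c.1)).card := by
  set q := n - k with hqdef
  set p := n / q with hpdef
  set s := n % q with hsdef
  have hps : p * q + s = n := by rw [hpdef, hsdef, Nat.mul_comm]; exact Nat.div_add_mod n q
  have hsq : s < q := Nat.mod_lt n hnk
  have hqn : q ≤ n := Nat.sub_le n k
  have hp1 : 1 ≤ p := (Nat.one_le_div_iff hnk).mpr hqn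
  have hpn : p ≤ n := by
    calc p ≤ p * q := Nat.le_mul_of_pos_right p hnk
    _ ≤ n := by omega
  have hNμ : ∀ c ∈ μ.cells, c.1 < n := fun c hc => hcard ▸ (cell_lt_card hc).1
  have hNν : ∀ c ∈ (nkStar n k).cells, c.1 < n := by
    intro c hc
    simp only [nkStar, YoungDiagram.mem_mk, Finset.mem_filter, Finset.mem_product,
      Finset.mem_range] at hc
    exact hc.1.1
  rw [count_rows μ n hNμ t, count_rows (nkStar n k) n hNν t]
  -- abbreviations
  set lam : ℕ → ℕ := fun i => μ.rowLen i with hlam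
  set u : ℕ → ℕ := fun i => (t + i).toNat with hu
  have hrho : ∀ i, (nkStar n k).rowLen i = min q (n - i * q) :=
    fun i => rowLen_nkStar hnk i
  set rho : ℕ → ℕ := fun i => min q (n - i * q) with hrhodef
  have hrw : ∑ i ∈ Finset.range n, ((nkStar n k).rowLen i - u i)
      = ∑ i ∈ Finset.range n, (rho i - u i) :=
    Finset.sum_congr rfl (fun i _ => by rw [hrho])
  rw [hrw]
  -- facts
  have hlam_le : ∀ i, lam i ≤ q := fun i => hq ▸ μ.rowLen_anti 0 i (Nat.zero_le i)
  have hu_mono : ∀ i j : ℕ, i ≤ j → u i ≤ u j := by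
    intro i j hij
    simp only [hu]
    omega
  have hrho_q : ∀ i < p, rho i = q := by
    intro i hip
    have h1 : i * q ≤ (p - 1) * q := Nat.mul_le_mul_right q (by omega)
    have h2 : (p - 1) * q + q = p * q := by
      have : p - 1 + 1 = p := by omega
      calc (p - 1) * q + q = (p - 1 + 1) * q := by ring
      _ = p * q := by rw [this]
    simp only [hrhodef]
    omega
  have hrho_p : rho p = s := by
    simp only [hrhodef]
    omega
  -- the positive-support prefix
  set d : ℕ → ℕ := fun i => lam i - u i with hd
  set F := (Finset.range n).filter (fun i => 0 < d i) with hF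
  set m := F.card with hm
  have hFrange : F = Finset.range m := by
    rw [hm]
    apply lower_eq_range
    intro i j hij hj
    simp only [hF, Finset.mem_filter, Finset.mem_range] at hj ⊢
    refine ⟨by omega, ?_⟩
    have h1 : d j ≤ d i := by
      have h2 := μ.rowLen_anti i j hij
      have h3 := hu_mono i j hij
      simp only [hd, hlam]
      omega
    omega
  have hmn : m ≤ n := by
    rw [hm, hF]
    calc F.card ≤ (Finset.range n).card := Finset.card_le_card (Finset.filter_subset _ _)
    _ = n := Finset.card_range n
  have hsum_d : ∑ i ∈ Finset.range n, d i = ∑ i ∈ Finset.range m, d i := by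
    rw [← hFrange, hF]
    rw [← Finset.sum_filter_add_sum_filter_not (Finset.range n) (fun i => 0 < d i) d]
    have : ∑ i ∈ (Finset.range n).filter (fun i => ¬ 0 < d i), d i = 0 := by
      apply Finset.sum_eq_zero
      intro i hi
      simp only [Finset.mem_filter] at hi
      omega
    omega
  show ∑ i ∈ Finset.range n, d i ≤ _
  rw [hsum_d]
  by_cases hcase : m ≤ p
  · -- easy case
    calc ∑ i ∈ Finset.range m, d i ≤ ∑ i ∈ Finset.range m, (rho i - u i) := by
          apply Finset.sum_le_sum
          intro i hi
          simp only [Finset.mem_range] at hi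
          have h1 : rho i = q := hrho_q i (by omega)
          have h2 : lam i ≤ q := hlam_le i
          simp only [hd]
          omega
    _ ≤ ∑ i ∈ Finset.range n, (rho i - u i) :=
          Finset.sum_le_sum_of_subset (Finset.range_subset_range.mpr hmn)
  · -- hard case: p < m, work in ℤ
    push_neg at hcase
    have hpos : ∀ i < m, u i < lam i := by
      intro i hi
      have : i ∈ F := by rw [hFrange]; exact Finset.mem_range.mpr hi
      simp only [hF, Finset.mem_filter] at this
      have := this.2
      simp only [hd] at this
      omega
    have hp1n : p + 1 ≤ n := by omega
    -- cast target
    rw [← Nat.cast_le (α := ℤ)]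
    push_cast
    -- LHS as ℤ
    have hL : (∑ i ∈ Finset.range m, (d i : ℤ))
        = ∑ i ∈ Finset.range m, ((lam i : ℤ) - u i) := by
      apply Finset.sum_congr rfl
      intro i hi
      simp only [Finset.mem_range] at hi
      have := hpos i hi
      simp only [hd]
      push_cast [Nat.cast_sub this.le]
      ring
    have hlam_sum : ∑ i ∈ Finset.range m, (lam i : ℤ) ≤ n := by
      have h1 : ∑ i ∈ Finset.range m, lam i ≤ ∑ i ∈ Finset.range n, lam i :=
        Finset.sum_le_sum_of_subset (Finset.range_subset_range.mpr hmn)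
      have h2 : ∑ i ∈ Finset.range n, lam i = n := by
        rw [← card_eq_sum_rowLen μ n hNμ, hcard]
      calc ∑ i ∈ Finset.range m, (lam i : ℤ) = ((∑ i ∈ Finset.range m, lam i : ℕ) : ℤ) := by
            push_cast; ring
      _ ≤ n := by exact_mod_cast h2 ▸ h1
    have hu_sum : ∑ i ∈ Finset.range (p + 1), (u i : ℤ) ≤ ∑ i ∈ Finset.range m, (u i : ℤ) := by
      apply Finset.sum_le_sum_of_subset_of_nonneg (Finset.range_subset_range.mpr (by omega))
      intro i _ _
      positivity
    -- RHS lower bound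
    have hR : ∑ i ∈ Finset.range (p + 1), (((rho i - u i : ℕ)) : ℤ)
        ≤ ∑ i ∈ Finset.range n, (((rho i - u i : ℕ)) : ℤ) := by
      apply Finset.sum_le_sum_of_subset_of_nonneg (Finset.range_subset_range.mpr hp1n)
      intro i _ _
      positivity
    have hR2 : ∑ i ∈ Finset.range p, ((q : ℤ) - u i) + ((s : ℤ) - u p)
        ≤ ∑ i ∈ Finset.range (p + 1), (((rho i - u i : ℕ)) : ℤ) := by
      rw [Finset.sum_range_succ]
      have h1 : ∀ i ∈ Finset.range p, (q : ℤ) - u i ≤ ((rho i - u i : ℕ) : ℤ) := by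
        intro i hi
        simp only [Finset.mem_range] at hi
        rw [hrho_q i hi]
        omega
      have h2 : (s : ℤ) - u p ≤ ((rho p - u p : ℕ) : ℤ) := by
        rw [hrho_p]
        omega
      exact add_le_add (Finset.sum_le_sum h1) h2
    have hq_sum : ∑ i ∈ Finset.range p, ((q : ℤ) - u i)
        = (p : ℤ) * q - ∑ i ∈ Finset.range p, (u i : ℤ) := by
      rw [Finset.sum_sub_distrib, Finset.sum_const, Finset.card_range, nsmul_eq_mul]
    have hfinal : (∑ i ∈ Finset.range m, (d i : ℤ))
        ≤ ∑ i ∈ Finset.range n, (((rho i - u i : ℕ)) : ℤ) := by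
      rw [hL]
      rw [Finset.sum_sub_distrib]
      have hsplit : ∑ i ∈ Finset.range (p + 1), (u i : ℤ)
          = ∑ i ∈ Finset.range p, (u i : ℤ) + u p := Finset.sum_range_succ _ p
      calc ∑ i ∈ Finset.range m, (lam i : ℤ) - ∑ i ∈ Finset.range m, (u i : ℤ)
          ≤ (n : ℤ) - ∑ i ∈ Finset.range (p + 1), (u i : ℤ) := by
            have := hu_sum
            have := hlam_sum
            omega
      _ = ∑ i ∈ Finset.range p, ((q : ℤ) - u i) + ((s : ℤ) - u p) := by
            rw [hq_sum, hsplit]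
            have : (p : ℤ) * q + s = n := by exact_mod_cast hps
            linarith
      _ ≤ ∑ i ∈ Finset.range (p + 1), (((rho i - u i : ℕ)) : ℤ) := hR2
      _ ≤ _ := hR
    exact_mod_cast hfinal


lemma layer_cell (z x : ℤ) (M : ℕ) (hz : z < x + M) :
    ((((Finset.Ico x (x + M)).filter (fun t => t ≤ z))).card : ℤ) = max (z + 1 - x) 0 := by
  have h1 : (Finset.Ico x (x + M)).filter (fun t => t ≤ z)
      = Finset.Ico x (min (x + M) (z + 1)) := by
    ext i
    simp only [Finset.mem_filter, Finset.mem_Ico, lt_min_iff]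
    omega
  rw [h1, Int.card_Ico]
  omega

lemma layer_cake (s : Finset (ℕ × ℕ)) (x : ℤ) (M : ℕ)
    (hM : ∀ c ∈ s, (c.2 : ℤ) - c.1 < x + M) :
    ∑ c ∈ s, max ((c.2 : ℤ) - c.1 + 1 - x) 0
      = ∑ t ∈ Finset.Ico x (x + M), ((s.filter (fun c => t ≤ (c.2 : ℤ) - c.1)).card : ℤ) := by
  have h1 : ∀ c ∈ s, max ((c.2 : ℤ) - c.1 + 1 - x) 0
      = ((((Finset.Ico x (x + M)).filter (fun t => t ≤ (c.2 : ℤ) - c.1))).card : ℤ) :=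
    fun c hc => (layer_cell _ x M (hM c hc)).symm
  rw [Finset.sum_congr rfl h1]
  have h2 : ∑ c ∈ s, (((Finset.Ico x (x + M)).filter (fun t => t ≤ (c.2 : ℤ) - c.1)).card)
      = ∑ t ∈ Finset.Ico x (x + M), ((s.filter (fun c => t ≤ (c.2 : ℤ) - c.1)).card) := by
    simp only [Finset.card_filter]
    exact Finset.sum_comm
  exact_mod_cast congrArg (Nat.cast : ℕ → ℤ) h2

section keys

variable (n : ℕ)

def keyC : ℕ × ℕ → ℤ := fun c => (c.2 : ℤ) * n + c.1
def keyD : ℕ × ℕ → ℤ := fun c => ((c.2 : ℤ) - c.1) * n + c.1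

lemma keyC_iff {c c' : ℕ × ℕ} (hc : c.1 < n) (hc' : c'.1 < n) :
    keyC n c' ≤ keyC n c ↔ (c'.2 < c.2 ∨ (c'.2 = c.2 ∧ c'.1 ≤ c.1)) := by
  rw [keyC, keyC, lexZ (by exact_mod_cast Nat.zero_le c.1) (by exact_mod_cast hc)
    (by exact_mod_cast Nat.zero_le c'.1) (by exact_mod_cast hc')]
  omega

lemma keyD_iff {c c' : ℕ × ℕ} (hc : c.1 < n) (hc' : c'.1 < n) :
    keyD n c' ≤ keyD n c ↔
      (((c'.2 : ℤ) - (c'.1 : ℤ) < (c.2 : ℤ) - (c.1 : ℤ)) ∨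
        ((c'.2 : ℤ) - (c'.1 : ℤ) = (c.2 : ℤ) - (c.1 : ℤ) ∧ c'.1 ≤ c.1)) := by
  rw [keyD, keyD, lexZ (by exact_mod_cast Nat.zero_le c.1) (by exact_mod_cast hc)
    (by exact_mod_cast Nat.zero_le c'.1) (by exact_mod_cast hc')]
  omega

lemma keyC_inj {c c' : ℕ × ℕ} (hc : c.1 < n) (hc' : c'.1 < n)
    (h : keyC n c = keyC n c') : c = c' := by
  have h1 := (keyC_iff n hc hc').mp h.ge
  have h2 := (keyC_iff n hc' hc).mp h.le
  have : c.1 = c'.1 ∧ c.2 = c'.2 := by omega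
  exact Prod.ext this.1 this.2

lemma keyD_inj {c c' : ℕ × ℕ} (hc : c.1 < n) (hc' : c'.1 < n)
    (h : keyD n c = keyD n c') : c = c' := by
  have h1 := (keyD_iff n hc hc').mp h.ge
  have h2 := (keyD_iff n hc' hc).mp h.le
  have : c.1 = c'.1 ∧ c.2 = c'.2 := by omega
  exact Prod.ext this.1 this.2

end keys

lemma colTab_eq_rnk {μ : YoungDiagram} {n : ℕ} (hcard : μ.card = n) {c : ℕ × ℕ}
    (hc : c ∈ μ.cells) : colTab μ c = rnk μ.cells (keyC n) c := by
  unfold colTab rnk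
  congr 1
  apply Finset.filter_congr
  intro c' hc'
  have h1 : c.1 < n := hcard ▸ (cell_lt_card hc).1
  have h2 : c'.1 < n := hcard ▸ (cell_lt_card hc').1
  simp only [keyC_iff n h1 h2]

lemma diagTab_eq_rnk {μ : YoungDiagram} {n : ℕ} (hcard : μ.card = n) {c : ℕ × ℕ}
    (hc : c ∈ μ.cells) : diagTab μ c = rnk μ.cells (keyD n) c := by
  unfold diagTab rnk
  congr 1
  apply Finset.filter_congr
  intro c' hc'
  have h1 : c.1 < n := hcard ▸ (cell_lt_card hc).1
  have h2 : c'.1 < n := hcard ▸ (cell_lt_card hc').1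
  simp only [keyD_iff n h1 h2]


lemma key_ineq {n k : ℕ} (μ : YoungDiagram) (hcard : μ.card = n)
    (hq : μ.rowLen 0 = n - k) (hnk : 1 ≤ n - k) (m : ℕ) (hm1 : 1 ≤ m) (hmn : m ≤ n) :
    ∑ c ∈ μ.cells.filter (fun c => m ≤ colTab μ c), ((c.2 : ℤ) - c.1 + 1)
      ≤ ∑ c ∈ (nkStar n k).cells.filter (fun c => m ≤ diagTab (nkStar n k) c),
          ((c.2 : ℤ) - c.1 + 1) := by
  set ν := nkStar n k with hν
  have hνcard : ν.card = n := card_nkStar hnk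
  have hinjC : ∀ c ∈ μ.cells, ∀ c' ∈ μ.cells, keyC n c = keyC n c' → c = c' :=
    fun c hc c' hc' h => keyC_inj n (hcard ▸ (cell_lt_card hc).1)
      (hcard ▸ (cell_lt_card hc').1) h
  have hinjD : ∀ c ∈ ν.cells, ∀ c' ∈ ν.cells, keyD n c = keyD n c' → c = c' :=
    fun c hc c' hc' h => keyD_inj n (hνcard ▸ (cell_lt_card hc).1)
      (hνcard ▸ (cell_lt_card hc').1) h
  -- identify filters
  have hA : μ.cells.filter (fun c => m ≤ colTab μ c)
      = μ.cells.filter (fun c => m ≤ rnk μ.cells (keyC n) c) :=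
    Finset.filter_congr (fun c hc => by rw [colTab_eq_rnk hcard hc])
  have hB : ν.cells.filter (fun c => m ≤ diagTab ν c)
      = ν.cells.filter (fun c => m ≤ rnk ν.cells (keyD n) c) :=
    Finset.filter_congr (fun c hc => by rw [diagTab_eq_rnk hνcard hc])
  have hAcard : (μ.cells.filter (fun c => m ≤ colTab μ c)).card = n + 1 - m := by
    rw [hA, card_filter_rnk μ.cells (keyC n) hinjC m hm1]
    show μ.card + 1 - m = n + 1 - m
    rw [hcard]
  have hBcard : (ν.cells.filter (fun c => m ≤ diagTab ν c)).card = n + 1 - m := by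
    rw [hB, card_filter_rnk ν.cells (keyD n) hinjD m hm1]
    show ν.card + 1 - m = n + 1 - m
    rw [hνcard]
  -- the m-th cell in diagonal order
  have hm_mem : m ∈ ν.cells.image (rnk ν.cells (keyD n)) := by
    rw [image_rnk ν.cells (keyD n) hinjD]
    show m ∈ Finset.Icc 1 ν.card
    rw [hνcard]
    exact Finset.mem_Icc.mpr ⟨hm1, hmn⟩
  obtain ⟨c₀, hc₀mem, hc₀rnk⟩ := Finset.mem_image.mp hm_mem
  set x : ℤ := (c₀.2 : ℤ) - c₀.1 + 1 with hx
  set A := μ.cells.filter (fun c => m ≤ colTab μ c) with hAdef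
  set B := ν.cells.filter (fun c => m ≤ diagTab ν c) with hBdef
  -- facts about B
  have hBge : ∀ c ∈ B, x ≤ (c.2 : ℤ) - c.1 + 1 := by
    intro c hc
    simp only [hBdef, Finset.mem_filter] at hc
    obtain ⟨hcmem, hcm⟩ := hc
    by_contra hlt
    push_neg at hlt
    have hcont : (c.2 : ℤ) - c.1 < (c₀.2 : ℤ) - c₀.1 := by omega
    have hkey : keyD n c < keyD n c₀ := by
      by_contra hge
      push_neg at hge
      have := (keyD_iff n (hνcard ▸ (cell_lt_card hcmem).1)
        (hνcard ▸ (cell_lt_card hc₀mem).1)).mp hge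
      omega
    have := rnk_lt_rnk ν.cells (keyD n) hc₀mem hkey
    rw [hc₀rnk] at this
    rw [diagTab_eq_rnk hνcard hcmem] at hcm
    omega
  have hBle : ∀ c ∈ ν.cells, c ∉ B → (c.2 : ℤ) - c.1 + 1 ≤ x := by
    intro c hcmem hcB
    by_contra hgt
    push_neg at hgt
    have hcont : (c₀.2 : ℤ) - c₀.1 < (c.2 : ℤ) - c.1 := by omega
    have hkey : keyD n c₀ < keyD n c := by
      by_contra hge
      push_neg at hge
      have := (keyD_iff n (hνcard ▸ (cell_lt_card hc₀mem).1)
        (hνcard ▸ (cell_lt_card hcmem).1)).mp hge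
      omega
    have hlt := rnk_lt_rnk ν.cells (keyD n) hcmem hkey
    rw [hc₀rnk] at hlt
    apply hcB
    simp only [hBdef, Finset.mem_filter]
    exact ⟨hcmem, by rw [diagTab_eq_rnk hνcard hcmem]; omega⟩
  -- bounds for layer cake
  have hxlow : -(n : ℤ) < x := by
    have := hνcard ▸ (cell_lt_card hc₀mem).1
    simp only [hx]
    omega
  have hMμ : ∀ c ∈ μ.cells, (c.2 : ℤ) - c.1 < x + (2 * n : ℕ) := by
    intro c hc
    have := hcard ▸ (cell_lt_card hc).2
    push_cast
    omega
  have hMν : ∀ c ∈ ν.cells, (c.2 : ℤ) - c.1 < x + (2 * n : ℕ) := by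
    intro c hc
    have := hνcard ▸ (cell_lt_card hc).2
    push_cast
    omega
  -- chain
  have step1 : ∑ c ∈ A, ((c.2 : ℤ) - c.1 + 1)
      ≤ (A.card : ℤ) * x + ∑ c ∈ A, max ((c.2 : ℤ) - c.1 + 1 - x) 0 := by
    have h1 : ∀ c ∈ A, ((c.2 : ℤ) - c.1 + 1)
        ≤ x + max ((c.2 : ℤ) - c.1 + 1 - x) 0 := by
      intro c _
      have := le_max_left ((c.2 : ℤ) - c.1 + 1 - x) 0
      omega
    calc ∑ c ∈ A, ((c.2 : ℤ) - c.1 + 1)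
        ≤ ∑ c ∈ A, (x + max ((c.2 : ℤ) - c.1 + 1 - x) 0) := Finset.sum_le_sum h1
    _ = (A.card : ℤ) * x + ∑ c ∈ A, max ((c.2 : ℤ) - c.1 + 1 - x) 0 := by
        rw [Finset.sum_add_distrib, Finset.sum_const, nsmul_eq_mul]
  have step2 : ∑ c ∈ A, max ((c.2 : ℤ) - c.1 + 1 - x) 0
      ≤ ∑ c ∈ μ.cells, max ((c.2 : ℤ) - c.1 + 1 - x) 0 :=
    Finset.sum_le_sum_of_subset_of_nonneg (Finset.filter_subset _ _)
      (fun c _ _ => le_max_right _ 0)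
  have step3 : ∑ c ∈ μ.cells, max ((c.2 : ℤ) - c.1 + 1 - x) 0
      ≤ ∑ c ∈ ν.cells, max ((c.2 : ℤ) - c.1 + 1 - x) 0 := by
    rw [layer_cake μ.cells x (2 * n) hMμ, layer_cake ν.cells x (2 * n) hMν]
    apply Finset.sum_le_sum
    intro t _
    exact_mod_cast countG μ hcard hq hnk t
  have step4 : ∑ c ∈ ν.cells, max ((c.2 : ℤ) - c.1 + 1 - x) 0
      = ∑ c ∈ B, ((c.2 : ℤ) - c.1 + 1) - (B.card : ℤ) * x := by
    rw [← Finset.sum_filter_add_sum_filter_not ν.cells (fun c => m ≤ diagTab ν c)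
      (fun c => max ((c.2 : ℤ) - c.1 + 1 - x) 0)]
    have h1 : ∑ c ∈ ν.cells.filter (fun c => ¬ m ≤ diagTab ν c),
        max ((c.2 : ℤ) - c.1 + 1 - x) 0 = 0 := by
      apply Finset.sum_eq_zero
      intro c hc
      simp only [Finset.mem_filter] at hc
      have hnotB : c ∉ B := by
        simp only [hBdef, Finset.mem_filter]
        tauto
      have := hBle c hc.1 hnotB
      omega
    have h2 : ∑ c ∈ B, max ((c.2 : ℤ) - c.1 + 1 - x) 0
        = ∑ c ∈ B, ((c.2 : ℤ) - c.1 + 1 - x) := by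
      apply Finset.sum_congr rfl
      intro c hc
      have := hBge c hc
      omega
    show ∑ c ∈ B, max ((c.2 : ℤ) - c.1 + 1 - x) 0 + _ = _
    rw [h1, h2, add_zero, Finset.sum_sub_distrib, Finset.sum_const, nsmul_eq_mul]
  have hcards : (A.card : ℤ) = (B.card : ℤ) := by
    rw [show A.card = n + 1 - m from hAcard, show B.card = n + 1 - m from hBcard]
  calc ∑ c ∈ A, ((c.2 : ℤ) - c.1 + 1)
      ≤ (A.card : ℤ) * x + ∑ c ∈ A, max ((c.2 : ℤ) - c.1 + 1 - x) 0 := step1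
  _ ≤ (A.card : ℤ) * x + ∑ c ∈ ν.cells, max ((c.2 : ℤ) - c.1 + 1 - x) 0 := by
      have := le_trans step2 step3
      omega
  _ = ∑ c ∈ B, ((c.2 : ℤ) - c.1 + 1) := by
      rw [step4, hcards]
      ring


lemma telescope_f (f : ℕ → ℝ) : ∀ a : ℕ, 1 ≤ a →
    ∑ m ∈ Finset.Icc 2 a, (f m - f (m - 1)) = f a - f 1 := by
  intro a
  induction a with
  | zero => omega
  | succ a ih =>
    intro _
    by_cases ha : 1 ≤ a
    · have h1 : Finset.Icc 2 (a + 1) = insert (a + 1) (Finset.Icc 2 a) := by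
        ext m
        simp only [Finset.mem_Icc, Finset.mem_insert]
        omega
      rw [h1, Finset.sum_insert (by simp), ih ha]
      simp only [Nat.add_sub_cancel]
      ring
    · have ha0 : a = 0 := by omega
      subst ha0
      simp

lemma rpow_expand (α : ℝ) (n a : ℕ) (ha1 : 1 ≤ a) (han : a ≤ n) :
    (a : ℝ) ^ (α - 1) = 1 + ∑ m ∈ Finset.Icc 2 n,
      (if m ≤ a then ((m : ℝ) ^ (α - 1) - ((m - 1 : ℕ) : ℝ) ^ (α - 1)) else 0) := by
  have h1 : ∑ m ∈ Finset.Icc 2 n,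
      (if m ≤ a then ((m : ℝ) ^ (α - 1) - ((m - 1 : ℕ) : ℝ) ^ (α - 1)) else 0)
      = ∑ m ∈ (Finset.Icc 2 n).filter (fun m => m ≤ a),
          ((m : ℝ) ^ (α - 1) - ((m - 1 : ℕ) : ℝ) ^ (α - 1)) :=
    (Finset.sum_filter _ _).symm
  have h2 : (Finset.Icc 2 n).filter (fun m => m ≤ a) = Finset.Icc 2 a := by
    ext m
    simp only [Finset.mem_filter, Finset.mem_Icc]
    omega
  rw [h1, h2, telescope_f (fun m => ((m : ℕ) : ℝ) ^ (α - 1)) a ha1]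
  simp only [Nat.cast_one, Real.one_rpow]
  ring

lemma S_expand (α : ℝ) (n : ℕ) (μ : YoungDiagram) (T : ℕ × ℕ → ℕ)
    (hT1 : ∀ c ∈ μ.cells, 1 ≤ T c) (hTn : ∀ c ∈ μ.cells, T c ≤ n) :
    ∑ c ∈ μ.cells, (((c.2 : ℝ) - (c.1 : ℝ) + 1) * ((T c : ℝ) ^ (α - 1)))
      = (∑ c ∈ μ.cells, ((c.2 : ℝ) - (c.1 : ℝ) + 1))
        + ∑ m ∈ Finset.Icc 2 n,
            (((m : ℝ) ^ (α - 1) - ((m - 1 : ℕ) : ℝ) ^ (α - 1))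
              * ∑ c ∈ μ.cells.filter (fun c => m ≤ T c), ((c.2 : ℝ) - (c.1 : ℝ) + 1)) := by
  have h1 : ∀ c ∈ μ.cells,
      ((c.2 : ℝ) - (c.1 : ℝ) + 1) * ((T c : ℝ) ^ (α - 1))
      = ((c.2 : ℝ) - (c.1 : ℝ) + 1)
        + ∑ m ∈ Finset.Icc 2 n, (if m ≤ T c then
            ((c.2 : ℝ) - (c.1 : ℝ) + 1) * ((m : ℝ) ^ (α - 1) - ((m - 1 : ℕ) : ℝ) ^ (α - 1))
          else 0) := by
    intro c hc
    rw [rpow_expand α n (T c) (hT1 c hc) (hTn c hc), mul_add, mul_one, Finset.mul_sum]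
    congr 1
    apply Finset.sum_congr rfl
    intro m _
    rw [mul_ite, mul_zero]
  rw [Finset.sum_congr rfl h1, Finset.sum_add_distrib]
  congr 1
  rw [Finset.sum_comm]
  apply Finset.sum_congr rfl
  intro m _
  rw [Finset.mul_sum, ← Finset.sum_filter]
  apply Finset.sum_congr rfl
  intro c _
  ring

lemma cast_wsum (S : Finset (ℕ × ℕ)) :
    ((∑ c ∈ S, ((c.2 : ℤ) - c.1 + 1) : ℤ) : ℝ) = ∑ c ∈ S, ((c.2 : ℝ) - (c.1 : ℝ) + 1) := by
  push_cast
  rfl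

/-- Diagonal-tableau domination for `α ≥ 1`: if `λ ⊢ n` has first part `λ₁ = n − k`
with `1 ≤ n − k`, then `eig_α(T_λ^↓) ≤ eig_α(T_{(n−k,⋆)}^↘)`. -/
theorem eigb_colTab_le_diagTab (α : ℝ) (hα : 1 ≤ α) (n k : ℕ)
    (μ : YoungDiagram) (hcard : μ.card = n) (hk : μ.rowLen 0 + k = n) (hnk : 1 ≤ n - k) :
    eigb α μ (colTab μ) ≤ eigb α (nkStar n k) (diagTab (nkStar n k)) := by
  have hq : μ.rowLen 0 = n - k := by omega
  have hn1 : 1 ≤ n := by omega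
  set ν := nkStar n k with hν
  have hνcard : ν.card = n := card_nkStar hnk
  -- tableau bounds
  have hT1μ : ∀ c ∈ μ.cells, 1 ≤ colTab μ c := by
    intro c hc
    apply Finset.card_pos.mpr
    exact ⟨c, Finset.mem_filter.mpr ⟨hc, Or.inr ⟨rfl, le_refl c.1⟩⟩⟩
  have hTnμ : ∀ c ∈ μ.cells, colTab μ c ≤ n := by
    intro c _
    calc colTab μ c ≤ μ.cells.card := Finset.card_le_card (Finset.filter_subset _ _)
    _ = n := hcard
  have hT1ν : ∀ c ∈ ν.cells, 1 ≤ diagTab ν c := by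
    intro c hc
    apply Finset.card_pos.mpr
    exact ⟨c, Finset.mem_filter.mpr ⟨hc, Or.inr ⟨rfl, le_refl c.1⟩⟩⟩
  have hTnν : ∀ c ∈ ν.cells, diagTab ν c ≤ n := by
    intro c _
    calc diagTab ν c ≤ ν.cells.card := Finset.card_le_card (Finset.filter_subset _ _)
    _ = n := hνcard
  unfold eigb
  rw [hcard, hνcard]
  apply mul_le_mul_of_nonneg_left _ (by
    apply inv_nonneg.mpr
    apply Finset.sum_nonneg
    intro j _
    exact Real.rpow_nonneg (Nat.cast_nonneg j) α)
  rw [S_expand α n μ (colTab μ) hT1μ hTnμ, S_expand α n ν (diagTab ν) hT1ν hTnν]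
  apply add_le_add
  · -- total weight comparison : m = 1 case
    have h1 := key_ineq μ hcard hq hnk 1 le_rfl hn1
    have hfμ : μ.cells.filter (fun c => 1 ≤ colTab μ c) = μ.cells :=
      Finset.filter_true_of_mem hT1μ
    have hfν : ν.cells.filter (fun c => 1 ≤ diagTab ν c) = ν.cells :=
      Finset.filter_true_of_mem hT1ν
    rw [hfμ, hfν] at h1
    rw [← cast_wsum μ.cells, ← cast_wsum ν.cells]
    exact_mod_cast h1
  · apply Finset.sum_le_sum
    intro m hm
    simp only [Finset.mem_Icc] at hm
    have hg : 0 ≤ (m : ℝ) ^ (α - 1) - ((m - 1 : ℕ) : ℝ) ^ (α - 1) := by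
      rw [sub_nonneg]
      apply Real.rpow_le_rpow (Nat.cast_nonneg _) (Nat.cast_le.mpr (Nat.sub_le m 1))
        (by linarith)
    apply mul_le_mul_of_nonneg_left _ hg
    have h2 := key_ineq μ hcard hq hnk m (by omega) hm.2
    rw [← cast_wsum, ← cast_wsum]
    exact_mod_cast h2
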